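/- arXiv:1706.08681 — 2 statements merged into one kernel-verified Lean document; each statement's English description precedes it below -/
import Mathlib

section
/- Let (X_n, n≥1) be i.i.d. positive random variables with density P(X_1 ∈ dx) = (ln 2)/(x ln²x) 1_{x≥2} dx. Then for every a > 0 with a < 1 and every λ > 0, 1 - E[exp(-λ X_1 a^n)] ∼ -ln(2)/(n ln a) as n → ∞, and consequently ∑_{n≥1} X_n a^n = +∞ almost surely. -/
open MeasureTheory ProbabilityTheory Filter Set NNReal ENNReal


noncomputable def gd (x : ℝ) : ℝ := Real.log 2 / (x * Real.log x ^ 2)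

lemma gd_nonneg {x : ℝ} (hx : 2 ≤ x) : 0 ≤ gd x := by
  have h1 : (0:ℝ) < x := by linarith
  have h2 : 0 < Real.log x := Real.log_pos (by linarith)
  have h3 : 0 < Real.log 2 := Real.log_pos (by norm_num)
  have h4 : 0 < x * Real.log x ^ 2 := by positivity
  unfold gd; positivity

lemma hasDerivAt_neglog2_div_log {x : ℝ} (hx : 2 ≤ x) :
    HasDerivAt (fun y => -Real.log 2 / Real.log y) (gd x) x := by
  have hx0 : x ≠ 0 := by linarith
  have hlx : Real.log x ≠ 0 := ne_of_gt (Real.log_pos (by linarith))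
  have h := ((Real.hasDerivAt_log hx0).inv hlx).const_mul (-Real.log 2)
  have heq : (fun y => -Real.log 2 * (Real.log y)⁻¹) = (fun y => -Real.log 2 / Real.log y) := by
    funext y; rw [div_eq_mul_inv]
  simp only [Pi.inv_apply] at h
  rw [heq] at h
  refine h.congr_deriv ?_
  unfold gd
  field_simp

lemma tendsto_neglog2_div_log :
    Tendsto (fun y => -Real.log 2 / Real.log y) atTop (nhds 0) := by
  have := Real.tendsto_log_atTop
  simpa using (tendsto_const_nhds (x := -Real.log 2)).div_atTop this

lemma integrableOn_gd {M : ℝ} (hM : 2 ≤ M) : IntegrableOn gd (Set.Ioi M) := by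
  refine integrableOn_Ioi_deriv_of_nonneg' (g := fun y => -Real.log 2 / Real.log y)
    (fun x hx => hasDerivAt_neglog2_div_log (le_trans hM hx)) (fun x hx => gd_nonneg (le_trans hM (le_of_lt hx)))
    tendsto_neglog2_div_log

lemma integral_gd_Ioi {M : ℝ} (hM : 2 ≤ M) :
    ∫ x in Set.Ioi M, gd x = Real.log 2 / Real.log M := by
  rw [integral_Ioi_of_hasDerivAt_of_nonneg' (g := fun y => -Real.log 2 / Real.log y)
    (fun x hx => hasDerivAt_neglog2_div_log (le_trans hM hx))
    (fun x hx => gd_nonneg (le_trans hM (le_of_lt hx))) tendsto_neglog2_div_log]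
  ring

lemma gd_meas : Measurable gd := by
  unfold gd
  exact measurable_const.div ((measurable_id.mul (Real.measurable_log.pow_const 2)))

noncomputable def dens : ℝ → ℝ≥0 := fun x => Real.toNNReal (Set.indicator {y : ℝ | 2 ≤ y} gd x)

lemma dens_meas : Measurable dens := by
  unfold dens
  exact (gd_meas.indicator (show MeasurableSet {y : ℝ | 2 ≤ y} from measurableSet_Ici)).real_toNNReal

lemma dens_eq : (fun x => ENNReal.ofReal
      (Set.indicator {y : ℝ | 2 ≤ y} (fun y => Real.log 2 / (y * Real.log y ^ 2)) x))
    = (fun x => ((dens x : ℝ≥0) : ℝ≥0∞)) := rfl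

lemma integral_withDensity_dens (h : ℝ → ℝ) :
    ∫ x, h x ∂(volume.withDensity (fun x => ((dens x : ℝ≥0) : ℝ≥0∞)))
      = ∫ x in Set.Ici 2, h x * gd x := by
  rw [integral_withDensity_eq_integral_smul dens_meas]
  rw [← integral_indicator measurableSet_Ici]
  congr 1
  funext x
  by_cases hx : x ∈ Set.Ici (2:ℝ)
  · have hx' : x ∈ {y : ℝ | 2 ≤ y} := hx
    rw [Set.indicator_of_mem hx]
    unfold dens
    rw [Set.indicator_of_mem hx']
    have : 0 ≤ gd x := by
      have h1 : (0:ℝ) < x := by have := hx.out; linarith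
      have h2 : 0 < Real.log x := Real.log_pos (by have := hx.out; linarith)
      have h3 : 0 < Real.log 2 := Real.log_pos (by norm_num)
      unfold gd; positivity
    simp [NNReal.smul_def, Real.coe_toNNReal _ this]
    ring
  · have hx' : x ∉ {y : ℝ | 2 ≤ y} := hx
    rw [Set.indicator_of_notMem hx]
    unfold dens
    rw [Set.indicator_of_notMem hx']
    simp

lemma integrableOn_gd_Ici {M : ℝ} (hM : 2 ≤ M) : IntegrableOn gd (Set.Ici M) := by
  rw [integrableOn_Ici_iff_integrableOn_Ioi]
  exact integrableOn_gd hM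

lemma integral_gd_Ici {M : ℝ} (hM : 2 ≤ M) :
    ∫ x in Set.Ici M, gd x = Real.log 2 / Real.log M := by
  rw [integral_Ici_eq_integral_Ioi]
  exact integral_gd_Ioi hM

lemma nu_Ici {M : ℝ} (hM : 2 ≤ M) :
    volume.withDensity (fun x => ((dens x : ℝ≥0) : ℝ≥0∞)) (Set.Ici M)
      = ENNReal.ofReal (Real.log 2 / Real.log M) := by
  rw [withDensity_apply _ measurableSet_Ici]
  have h1 : ∫⁻ x in Set.Ici M, ((dens x : ℝ≥0) : ℝ≥0∞)
      = ∫⁻ x in Set.Ici M, ENNReal.ofReal (gd x) := by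
    refine setLIntegral_congr_fun measurableSet_Ici (fun x hx => ?_)
    unfold dens
    rw [Set.indicator_of_mem (show x ∈ {y : ℝ | 2 ≤ y} from le_trans hM hx)]
    rfl
  rw [h1, ← ofReal_integral_eq_lintegral_ofReal (integrableOn_gd_Ici hM)
    (ae_restrict_of_forall_mem measurableSet_Ici fun x hx => gd_nonneg (le_trans hM hx))]
  rw [integral_gd_Ici hM]

noncomputable def FF (t : ℝ) : ℝ := ∫ x in Set.Ici 2, (1 - Real.exp (-(t*x))) * gd x

lemma oneminusexp_mem_Icc {t x : ℝ} (ht : 0 ≤ t) (hx : 0 ≤ x) :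
    (1 - Real.exp (-(t*x))) ∈ Set.Icc (0:ℝ) 1 := by
  constructor
  · simp only [sub_nonneg]
    exact Real.exp_le_one_iff.mpr (by nlinarith)
  · nlinarith [Real.exp_pos (-(t*x))]

lemma integrableOn_FF_integrand {t : ℝ} (ht : 0 ≤ t) {s : Set ℝ} (hs : MeasurableSet s)
    (hsub : s ⊆ Set.Ici 2) : IntegrableOn (fun x => (1 - Real.exp (-(t*x))) * gd x) s := by
  refine Integrable.mono ((integrableOn_gd_Ici le_rfl).mono_set hsub) ?_ ?_
  · exact ((measurable_const.sub ((measurable_const.mul measurable_id).neg.exp)).mul gd_meas).aestronglyMeasurable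
  · refine ae_restrict_of_forall_mem hs fun x hx => ?_
    have hx2 : (2:ℝ) ≤ x := hsub hx
    have h1 := oneminusexp_mem_Icc ht (by linarith : (0:ℝ) ≤ x)
    have h2 := gd_nonneg hx2
    rw [Real.norm_eq_abs, Real.norm_eq_abs, abs_of_nonneg (mul_nonneg h1.1 h2), abs_of_nonneg h2]
    exact mul_le_of_le_one_left h2 h1.2

lemma integrableOn_exp_gd {t : ℝ} (ht : 0 ≤ t) :
    IntegrableOn (fun x => Real.exp (-(t*x)) * gd x) (Set.Ici 2) := by
  refine Integrable.mono (integrableOn_gd_Ici le_rfl) ?_ ?_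
  · exact (((measurable_const.mul measurable_id).neg.exp).mul gd_meas).aestronglyMeasurable
  · refine ae_restrict_of_forall_mem measurableSet_Ici fun x hx => ?_
    have hx2 : (2:ℝ) ≤ x := hx
    have h2 := gd_nonneg hx2
    have h3 : Real.exp (-(t*x)) ≤ 1 := Real.exp_le_one_iff.mpr (by nlinarith)
    have h4 := Real.exp_pos (-(t*x))
    rw [Real.norm_eq_abs, Real.norm_eq_abs, abs_of_nonneg (mul_nonneg h4.le h2), abs_of_nonneg h2]
    exact mul_le_of_le_one_left h2 h3

lemma FF_eq {t : ℝ} (ht : 0 ≤ t) :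
    FF t = 1 - ∫ x in Set.Ici 2, Real.exp (-(t*x)) * gd x := by
  unfold FF
  have : ∀ x ∈ Set.Ici (2:ℝ), (1 - Real.exp (-(t*x))) * gd x
      = gd x - Real.exp (-(t*x)) * gd x := fun x _ => by ring
  rw [setIntegral_congr_fun measurableSet_Ici this,
    integral_sub (integrableOn_gd_Ici le_rfl) (integrableOn_exp_gd ht),
    integral_gd_Ici le_rfl]
  rw [div_self (ne_of_gt (Real.log_pos (by norm_num)))]

lemma FF_lower {t M : ℝ} (ht : 0 < t) (hM : 2 ≤ M) :
    (1 - Real.exp (-(t*M))) * (Real.log 2 / Real.log M) ≤ FF t := by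
  have hsub : Set.Ioi M ⊆ Set.Ici 2 := fun x hx => le_trans hM (le_of_lt hx)
  have step1 : ∫ x in Set.Ioi M, (1 - Real.exp (-(t*M))) * gd x
      ≤ ∫ x in Set.Ioi M, (1 - Real.exp (-(t*x))) * gd x := by
    refine setIntegral_mono_on ((integrableOn_gd hM).const_mul _)
      ((integrableOn_FF_integrand ht.le measurableSet_Ioi hsub)) measurableSet_Ioi
      (fun x hx => ?_)
    have hx' : M < x := hx
    have : Real.exp (-(t*x)) ≤ Real.exp (-(t*M)) :=
      Real.exp_le_exp.mpr (by nlinarith)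
    have := gd_nonneg (hsub hx)
    nlinarith
  have step2 : ∫ x in Set.Ioi M, (1 - Real.exp (-(t*x))) * gd x ≤ FF t := by
    unfold FF
    refine setIntegral_mono_set (integrableOn_FF_integrand ht.le measurableSet_Ici le_rfl)
      ?_ (HasSubset.Subset.eventuallyLE hsub)
    refine ae_restrict_of_forall_mem measurableSet_Ici fun x hx => ?_
    exact mul_nonneg (oneminusexp_mem_Icc ht.le (by have := hx.out; linarith)).1 (gd_nonneg hx)
  calc (1 - Real.exp (-(t*M))) * (Real.log 2 / Real.log M)
      = ∫ x in Set.Ioi M, (1 - Real.exp (-(t*M))) * gd x := by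
        rw [MeasureTheory.integral_const_mul, integral_gd_Ioi hM]
    _ ≤ FF t := le_trans step1 step2

lemma integrableOn_aux {t A B : ℝ} (hA : 2 ≤ A) :
    IntegrableOn (fun x => t * Real.log 2 / (Real.log x)^2) (Set.Icc A B) := by
  apply ContinuousOn.integrableOn_Icc
  apply ContinuousOn.div continuousOn_const
  · exact (Real.continuousOn_log.mono (fun x hx h => by
      have h1 := hx.1; rw [Set.mem_singleton_iff] at h; linarith [h ▸ h1])).pow 2
  · intro x hx
    have : (1:ℝ) < x := by have := hx.1; linarith
    exact pow_ne_zero 2 (ne_of_gt (Real.log_pos this))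

lemma FF_upper {t M : ℝ} (ht : 0 < t) (hM : 4 ≤ M) :
    FF t ≤ t * Real.log 2 * (Real.sqrt M / (Real.log 2)^2 + 4*M/(Real.log M)^2)
      + Real.log 2 / Real.log M := by
  have hM2 : (2:ℝ) ≤ M := by linarith
  have hsM2 : (2:ℝ) ≤ Real.sqrt M := by
    rw [show (2:ℝ) = Real.sqrt 4 by rw [show (4:ℝ) = 2^2 by norm_num, Real.sqrt_sq]; norm_num]
    exact Real.sqrt_le_sqrt hM
  have hsMM : Real.sqrt M ≤ M := by
    nlinarith [Real.sq_sqrt (by linarith : (0:ℝ) ≤ M), Real.sqrt_nonneg M]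
  have hlogM : 0 < Real.log M := Real.log_pos (by linarith)
  have hlog2 : 0 < Real.log 2 := Real.log_pos (by norm_num)
  -- split the integral
  have hsplit : FF t = (∫ x in Set.Icc 2 M, (1 - Real.exp (-(t*x))) * gd x)
      + ∫ x in Set.Ioi M, (1 - Real.exp (-(t*x))) * gd x := by
    unfold FF
    rw [← Set.Icc_union_Ioi_eq_Ici hM2]
    exact setIntegral_union (Set.disjoint_left.mpr (fun x hx hx' => absurd hx.2 (not_le.mpr hx'))) measurableSet_Ioi
      (integrableOn_FF_integrand ht.le measurableSet_Icc
        (fun x hx => le_trans le_rfl hx.1))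
      (integrableOn_FF_integrand ht.le measurableSet_Ioi
        (fun x hx => le_trans hM2 hx.le))
  -- tail bound
  have htail : ∫ x in Set.Ioi M, (1 - Real.exp (-(t*x))) * gd x
      ≤ Real.log 2 / Real.log M := by
    rw [← integral_gd_Ioi hM2]
    refine setIntegral_mono_on (integrableOn_FF_integrand ht.le measurableSet_Ioi
      (fun x hx => le_trans hM2 hx.le)) (integrableOn_gd hM2) measurableSet_Ioi
      (fun x hx => ?_)
    have hx2 : (2:ℝ) ≤ x := le_trans hM2 hx.le
    exact mul_le_of_le_one_left (gd_nonneg hx2) (oneminusexp_mem_Icc ht.le (by linarith)).2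
  -- main bound
  have hmain : ∫ x in Set.Icc 2 M, (1 - Real.exp (-(t*x))) * gd x
      ≤ t * Real.log 2 * (Real.sqrt M / (Real.log 2)^2 + 4*M/(Real.log M)^2) := by
    have step1 : ∫ x in Set.Icc 2 M, (1 - Real.exp (-(t*x))) * gd x
        ≤ ∫ x in Set.Icc 2 M, t * Real.log 2 / (Real.log x)^2 := by
      refine setIntegral_mono_on (integrableOn_FF_integrand ht.le measurableSet_Icc
        (fun x hx => hx.1)) (integrableOn_aux le_rfl) measurableSet_Icc (fun x hx => ?_)
      have hx2 : (2:ℝ) ≤ x := hx.1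
      have hxpos : (0:ℝ) < x := by linarith
      have h1 : 1 - Real.exp (-(t*x)) ≤ t*x := by
        nlinarith [Real.add_one_le_exp (-(t*x))]
      have h2 : 0 ≤ gd x := gd_nonneg hx2
      calc (1 - Real.exp (-(t*x))) * gd x ≤ (t*x) * gd x := by
            exact mul_le_mul_of_nonneg_right h1 h2
        _ = t * Real.log 2 / (Real.log x)^2 := by
            have hx0 : x ≠ 0 := ne_of_gt hxpos
            have hlx : Real.log x ≠ 0 := ne_of_gt (Real.log_pos (by linarith))
            unfold gd; field_simp
    have hsplit2 : ∫ x in Set.Icc 2 M, t * Real.log 2 / (Real.log x)^2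
        = (∫ x in Set.Icc 2 (Real.sqrt M), t * Real.log 2 / (Real.log x)^2)
          + ∫ x in Set.Ioc (Real.sqrt M) M, t * Real.log 2 / (Real.log x)^2 := by
      rw [← Set.Icc_union_Ioc_eq_Icc hsM2 hsMM]
      exact setIntegral_union (Set.disjoint_left.mpr (fun x hx hx' => absurd hx.2 (not_le.mpr hx'.1))) measurableSet_Ioc
        (integrableOn_aux le_rfl)
        ((integrableOn_aux hsM2).mono_set Set.Ioc_subset_Icc_self)
    have hb1 : ∫ x in Set.Icc 2 (Real.sqrt M), t * Real.log 2 / (Real.log x)^2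
        ≤ t * Real.log 2 * (Real.sqrt M / (Real.log 2)^2) := by
      have hc : ∀ x ∈ Set.Icc (2:ℝ) (Real.sqrt M),
          t * Real.log 2 / (Real.log x)^2 ≤ t * Real.log 2 / (Real.log 2)^2 := by
        intro x hx
        have hx2 : (2:ℝ) ≤ x := hx.1
        have : Real.log 2 ≤ Real.log x := Real.log_le_log (by norm_num) hx2
        apply div_le_div_of_nonneg_left (by positivity) (by positivity)
        · nlinarith
      calc ∫ x in Set.Icc 2 (Real.sqrt M), t * Real.log 2 / (Real.log x)^2
          ≤ ∫ _x in Set.Icc 2 (Real.sqrt M), t * Real.log 2 / (Real.log 2)^2 :=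
            setIntegral_mono_on (integrableOn_aux le_rfl) ((integrableOn_const_iff).mpr
              (Or.inr (by rw [Real.volume_Icc]; exact ENNReal.ofReal_lt_top))) measurableSet_Icc hc
        _ = (Real.sqrt M - 2) * (t * Real.log 2 / (Real.log 2)^2) := by
            rw [setIntegral_const, Real.volume_real_Icc_of_le (by linarith), smul_eq_mul]
        _ ≤ t * Real.log 2 * (Real.sqrt M / (Real.log 2)^2) := by
            rw [div_eq_mul_inv, div_eq_mul_inv]
            nlinarith [sq_nonneg (Real.log 2), mul_pos ht hlog2,
              inv_nonneg.mpr (sq_nonneg (Real.log 2))]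
    have hb2 : ∫ x in Set.Ioc (Real.sqrt M) M, t * Real.log 2 / (Real.log x)^2
        ≤ t * Real.log 2 * (4*M/(Real.log M)^2) := by
      have hlsM : Real.log (Real.sqrt M) = Real.log M / 2 := Real.log_sqrt (by linarith)
      have hc : ∀ x ∈ Set.Ioc (Real.sqrt M) M,
          t * Real.log 2 / (Real.log x)^2 ≤ t * Real.log 2 / (Real.log M / 2)^2 := by
        intro x hx
        have hxs : Real.sqrt M ≤ x := hx.1.le
        have : Real.log (Real.sqrt M) ≤ Real.log x := Real.log_le_log (by linarith) hxs
        rw [hlsM] at this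
        apply div_le_div_of_nonneg_left (by positivity) (by positivity)
        nlinarith
      calc ∫ x in Set.Ioc (Real.sqrt M) M, t * Real.log 2 / (Real.log x)^2
          ≤ ∫ _x in Set.Ioc (Real.sqrt M) M, t * Real.log 2 / (Real.log M / 2)^2 :=
            setIntegral_mono_on ((integrableOn_aux hsM2).mono_set Set.Ioc_subset_Icc_self)
              ((integrableOn_const_iff).mpr (Or.inr (by rw [Real.volume_Ioc]; exact ENNReal.ofReal_lt_top)))
              measurableSet_Ioc hc
        _ = (M - Real.sqrt M) * (t * Real.log 2 / (Real.log M / 2)^2) := by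
            rw [setIntegral_const, Real.volume_real_Ioc_of_le (by linarith), smul_eq_mul]
        _ ≤ t * Real.log 2 * (4*M/(Real.log M)^2) := by
            have h1 : (Real.log M / 2)^2 = (Real.log M)^2/4 := by ring
            rw [h1]
            rw [div_div_eq_mul_div, div_eq_mul_inv, div_eq_mul_inv]
            have hC : (0:ℝ) ≤ t * Real.log 2 * 4 * ((Real.log M)^2)⁻¹ := by positivity
            nlinarith [mul_le_mul_of_nonneg_right (sub_le_self M (Real.sqrt_nonneg M)) hC]
    calc ∫ x in Set.Icc 2 M, (1 - Real.exp (-(t*x))) * gd x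
        ≤ _ := step1
      _ = _ := hsplit2
      _ ≤ t * Real.log 2 * (Real.sqrt M / (Real.log 2)^2)
            + t * Real.log 2 * (4*M/(Real.log M)^2) := add_le_add hb1 hb2
      _ = t * Real.log 2 * (Real.sqrt M / (Real.log 2)^2 + 4*M/(Real.log M)^2) := by ring
  linarith [hsplit, htail, hmain]

lemma part1_tendsto {a l : ℝ} (ha0 : 0 < a) (ha1 : a < 1) (hl : 0 < l) :
    Tendsto (fun n : ℕ => FF (l * a ^ n) * ((n:ℝ) * (-Real.log a)) / Real.log 2)
      atTop (nhds 1) := by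
  set b : ℝ := -Real.log a with hbdef
  have hb : 0 < b := by
    simp only [hbdef]
    linarith [Real.log_neg ha0 ha1]
  set t : ℕ → ℝ := fun n => l * a ^ n with htdef
  have htpos : ∀ n, 0 < t n := fun n => mul_pos hl (pow_pos ha0 n)
  have hlog2 : (0:ℝ) < Real.log 2 := Real.log_pos (by norm_num)
  have h_t0 : Tendsto t atTop (nhds 0) := by
    simpa using (tendsto_pow_atTop_nhds_zero_of_lt_one ha0.le ha1).const_mul l
  rw [Metric.tendsto_atTop]
  intro ε hε
  -- choose c
  set c : ℝ := max 4 (Real.log (2/ε)) with hcdef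
  have hc4 : (4:ℝ) ≤ c := le_max_left _ _
  have hcpos : (0:ℝ) < c := by linarith
  have hexpc : Real.exp (-c) ≤ ε/2 := by
    have h1 : Real.log (2/ε) ≤ c := le_max_right _ _
    have h2 : Real.exp (-c) ≤ Real.exp (-Real.log (2/ε)) := Real.exp_le_exp.mpr (by linarith)
    have h3 : Real.exp (-Real.log (2/ε)) = ε/2 := by
      rw [Real.exp_neg, Real.exp_log (by positivity)]
      field_simp
    linarith
  set M : ℕ → ℝ := fun n => c / t n with hMdef
  have hM_top : Tendsto M atTop atTop := by
    have h1 : Tendsto t atTop (nhdsWithin 0 (Set.Ioi 0)) :=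
      tendsto_nhdsWithin_iff.mpr ⟨h_t0, Eventually.of_forall (fun n => htpos n)⟩
    have h2 : Tendsto (fun n => (t n)⁻¹) atTop atTop := h1.inv_tendsto_nhdsGT_zero
    simpa [hMdef, div_eq_mul_inv] using h2.const_mul_atTop hcpos
  set K : ℝ := Real.log c - Real.log l with hKdef
  have hlogM : ∀ n : ℕ, Real.log (M n) = K + (n:ℝ) * b := by
    intro n
    simp only [hMdef, htdef, hKdef, hbdef]
    rw [Real.log_div (ne_of_gt hcpos) (ne_of_gt (htpos n)),
      Real.log_mul (ne_of_gt hl) (ne_of_gt (pow_pos ha0 n)), Real.log_pow]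
    push_cast; ring
  have hden_top : Tendsto (fun n : ℕ => K + (n:ℝ) * b) atTop atTop := by
    apply tendsto_atTop_add_const_left
    exact tendsto_natCast_atTop_atTop.atTop_mul_const hb
  have hA : Tendsto (fun n : ℕ => (n:ℝ) * b / (K + (n:ℝ)*b)) atTop (nhds 1) := by
    have h1 : Tendsto (fun n : ℕ => 1 - K / (K + (n:ℝ)*b)) atTop (nhds 1) := by
      have := (tendsto_const_nhds (x := K) (f := atTop (α := ℕ))).div_atTop hden_top
      simpa using tendsto_const_nhds.sub this
    apply h1.congr'
    filter_upwards [hden_top.eventually_ge_atTop 1] with n hn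
    have hne : K + (n:ℝ)*b ≠ 0 := by linarith
    field_simp
    ring
  have hInv : Tendsto (fun n : ℕ => (K + (n:ℝ)*b)⁻¹) atTop (nhds 0) :=
    hden_top.inv_tendsto_atTop
  have hB : Tendsto (fun n : ℕ => (n:ℝ) * b / (K + (n:ℝ)*b)^2) atTop (nhds 0) := by
    have := hA.mul hInv
    rw [mul_zero] at this
    apply this.congr
    intro n; rw [sq, ← div_div]; ring
  have hC : Tendsto (fun n : ℕ => (n:ℝ) * b * Real.sqrt (c * t n)) atTop (nhds 0) := by
    have heq : ∀ n : ℕ, (n:ℝ) * b * Real.sqrt (c * t n)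
        = (b * Real.sqrt (c * l)) * ((n:ℝ) * Real.sqrt a ^ n) := by
      intro n
      simp only [htdef]
      have hpow : Real.sqrt (a ^ n) = Real.sqrt a ^ n := by
        have h1 : a ^ n = (Real.sqrt a ^ n) ^ 2 := by
          rw [← pow_mul, mul_comm, pow_mul, Real.sq_sqrt ha0.le]
        rw [h1, Real.sqrt_sq (pow_nonneg (Real.sqrt_nonneg a) n)]
      rw [show c * (l * a ^ n) = (c * l) * a ^ n by ring,
        Real.sqrt_mul (by positivity) (a ^ n), hpow]
      ring
    have h2 : Tendsto (fun n : ℕ => (n:ℝ) * Real.sqrt a ^ n) atTop (nhds 0) :=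
      tendsto_self_mul_const_pow_of_lt_one (Real.sqrt_nonneg a)
        ((Real.sqrt_lt' one_pos).mpr (by linarith))
    have := h2.const_mul (b * Real.sqrt (c * l))
    rw [mul_zero] at this
    exact this.congr (fun n => (heq n).symm)
  -- identities
  have hid1 : ∀ n, t n * M n = c := by
    intro n
    simp only [hMdef]
    field_simp
    exact div_self (htpos n).ne'
  have hid2 : ∀ n, t n * Real.sqrt (M n) = Real.sqrt (c * t n) := by
    intro n
    simp only [hMdef]
    rw [Real.sqrt_div hcpos.le, Real.sqrt_mul hcpos.le]
    calc t n * (Real.sqrt c / Real.sqrt (t n)) = Real.sqrt c * (t n / Real.sqrt (t n)) := by ring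
      _ = Real.sqrt c * Real.sqrt (t n) := by rw [Real.div_sqrt]
  set f : ℕ → ℝ := fun n => FF (t n) * ((n:ℝ) * b) / Real.log 2 with hfdef
  set U : ℕ → ℝ := fun n => (n:ℝ)*b * (t n * Real.sqrt (M n)) / (Real.log 2)^2
      + 4*(t n * M n)*((n:ℝ)*b/(K + (n:ℝ)*b)^2) + (n:ℝ)*b/(K + (n:ℝ)*b) with hUdef
  have hU : Tendsto U atTop (nhds 1) := by
    have h0 : Tendsto (fun n : ℕ => (n:ℝ)*b * Real.sqrt (c * t n) / (Real.log 2)^2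
        + 4*c*((n:ℝ)*b/(K + (n:ℝ)*b)^2) + (n:ℝ)*b/(K + (n:ℝ)*b)) atTop (nhds 1) := by
      have := ((hC.div_const ((Real.log 2)^2)).add (hB.const_mul (4*c))).add hA
      simpa using this
    apply h0.congr
    intro n
    simp only [hUdef]
    rw [hid1 n, hid2 n]
  set L : ℕ → ℝ := fun n => (1 - Real.exp (-c)) * ((n:ℝ)*b/(K + (n:ℝ)*b)) with hLdef
  have hL : Tendsto L atTop (nhds (1 - Real.exp (-c))) := by
    have := hA.const_mul (1 - Real.exp (-c))
    simpa using this
  -- eventual inequalities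
  have hev4 : ∀ᶠ n in atTop, 4 ≤ M n := hM_top.eventually_ge_atTop 4
  have hevD : ∀ᶠ (n : ℕ) in atTop, (1:ℝ) ≤ K + (n:ℝ)*b := hden_top.eventually_ge_atTop 1
  have hub : ∀ᶠ n in atTop, f n ≤ U n := by
    filter_upwards [hev4, hevD] with n hn4 hnD
    have hD : K + (n:ℝ)*b ≠ 0 := by linarith
    have h := FF_upper (htpos n) hn4
    have hnb : 0 ≤ (n:ℝ)*b/Real.log 2 := by positivity
    have h2 := mul_le_mul_of_nonneg_right h hnb
    calc f n = FF (t n) * ((n:ℝ)*b/Real.log 2) := by simp only [hfdef]; ring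
      _ ≤ (t n * Real.log 2 * (Real.sqrt (M n) / (Real.log 2)^2
            + 4*(M n)/(Real.log (M n))^2) + Real.log 2 / Real.log (M n))
            * ((n:ℝ)*b/Real.log 2) := h2
      _ = U n := by
          rw [hlogM n]
          simp only [hUdef]
          field_simp
  have hlb : ∀ᶠ n in atTop, L n ≤ f n := by
    filter_upwards [hev4, hevD] with n hn4 hnD
    have hD : K + (n:ℝ)*b ≠ 0 := by linarith
    have h := FF_lower (htpos n) (by linarith : (2:ℝ) ≤ M n)
    rw [show t n * M n = c from hid1 n] at h
    have hnb : 0 ≤ (n:ℝ)*b/Real.log 2 := by positivity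
    have h2 := mul_le_mul_of_nonneg_right h hnb
    calc L n = (1 - Real.exp (-c)) * (Real.log 2 / Real.log (M n)) * ((n:ℝ)*b/Real.log 2) := by
          rw [hlogM n]; simp only [hLdef]; field_simp
      _ ≤ FF (t n) * ((n:ℝ)*b/Real.log 2) := h2
      _ = f n := by simp only [hfdef]; ring
  have hUe : ∀ᶠ n in atTop, U n < 1 + ε :=
    hU.eventually_lt_const (by linarith)
  have hLe : ∀ᶠ n in atTop, 1 - ε < L n :=
    hL.eventually_const_lt (by linarith)
  have hfinal : ∀ᶠ n in atTop, dist (f n) 1 < ε := by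
    filter_upwards [hub, hlb, hUe, hLe] with n h1 h2 h3 h4
    rw [Real.dist_eq, abs_lt]
    constructor <;> linarith
  obtain ⟨N, hN⟩ := eventually_atTop.mp hfinal
  exact ⟨N, fun n hn => hN n hn⟩

theorem stmt_3
    {Ω : Type*} [MeasureSpace Ω] [IsProbabilityMeasure (ℙ : Measure Ω)]
    (X : ℕ → Ω → ℝ)
    (hmeas : ∀ n, Measurable (X n))
    (hindep : iIndepFun X ℙ)
    (hident : ∀ n, IdentDistrib (X n) (X 1) ℙ ℙ)
    (hlaw : (ℙ : Measure Ω).map (X 1)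
        = volume.withDensity (fun x => ENNReal.ofReal
            (Set.indicator {y : ℝ | 2 ≤ y}
              (fun y => Real.log 2 / (y * Real.log y ^ 2)) x)))
    (a : ℝ) (ha0 : 0 < a) (ha1 : a < 1) (l : ℝ) (hl : 0 < l) :
    Tendsto (fun n : ℕ =>
        (1 - ∫ ω, Real.exp (-l * X 1 ω * a ^ n) ∂ℙ)
          / (-Real.log 2 / (n * Real.log a))) atTop (nhds 1)
    ∧ ∀ᵐ ω ∂(ℙ : Measure Ω),
        Tendsto (fun N : ℕ => ∑ n ∈ Finset.range N, X (n + 1) ω * a ^ (n + 1))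
          atTop atTop := by
  rw [dens_eq] at hlaw
  have hlog2 : (0:ℝ) < Real.log 2 := Real.log_pos (by norm_num)
  have hloga : Real.log a < 0 := Real.log_neg ha0 ha1
  set b : ℝ := -Real.log a with hbdef
  have hb : 0 < b := by simp only [hbdef]; linarith
  -- probability of tail sets
  have hP_Ici : ∀ (m : ℕ) (M : ℝ), 2 ≤ M →
      ℙ (X m ⁻¹' Set.Ici M) = ENNReal.ofReal (Real.log 2 / Real.log M) := by
    intro m M hM
    have h1 : ℙ (X m ⁻¹' Set.Ici M) = ℙ (X 1 ⁻¹' Set.Ici M) :=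
      (hident m).measure_mem_eq measurableSet_Ici
    rw [h1, ← Measure.map_apply (hmeas 1) measurableSet_Ici, hlaw, nu_Ici hM]
  constructor
  · -- part 1
    have hE : ∀ n : ℕ, ∫ ω, Real.exp (-l * X 1 ω * a ^ n) ∂ℙ
        = ∫ x in Set.Ici 2, Real.exp (-((l * a ^ n) * x)) * gd x := by
      intro n
      have hm : Measurable (fun x : ℝ => Real.exp (-((l * a ^ n) * x))) :=
        (measurable_id.const_mul _).neg.exp
      calc ∫ ω, Real.exp (-l * X 1 ω * a ^ n) ∂ℙ
          = ∫ ω, (fun x => Real.exp (-((l * a ^ n) * x))) (X 1 ω) ∂ℙ := by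
            congr 1; funext ω; ring_nf
        _ = ∫ x, Real.exp (-((l * a ^ n) * x)) ∂(Measure.map (X 1) ℙ) :=
            (integral_map (hmeas 1).aemeasurable hm.aestronglyMeasurable).symm
        _ = ∫ x in Set.Ici 2, Real.exp (-((l * a ^ n) * x)) * gd x := by
            rw [hlaw, integral_withDensity_dens]
    have h1 := part1_tendsto ha0 ha1 hl
    apply h1.congr
    intro n
    rw [hE n, ← FF_eq (le_of_lt (mul_pos hl (pow_pos ha0 n)))]
    rw [div_div_eq_mul_div]
    ring
  · -- part 2
    set r : ℕ → ℝ := fun m => max 2 ((a ^ m)⁻¹) with hrdef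
    have hr2 : ∀ m, 2 ≤ r m := fun m => le_max_left _ _
    set s : ℕ → Set Ω := fun m => X m ⁻¹' Set.Ici (r m) with hsdef
    have hs_meas : ∀ m, MeasurableSet (s m) := fun m => (hmeas m) measurableSet_Ici
    have hs_indep : iIndepSet s ℙ := by
      rw [iIndepSet_iff_meas_biInter hs_meas]
      intro S
      exact hindep.measure_inter_preimage_eq_mul S (fun i _ => measurableSet_Ici)
    have hs_prob : ∀ m, ℙ (s m) = ENNReal.ofReal (Real.log 2 / Real.log (r m)) :=
      fun m => hP_Ici m (r m) (hr2 m)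
    -- divergence of the sum
    have hlogr : ∀ m : ℕ, Real.log (r m) ≤ Real.log 2 + (m:ℝ) * b := by
      intro m
      have hinv1 : (1:ℝ) ≤ (a ^ m)⁻¹ :=
        (one_le_inv₀ (pow_pos ha0 m)).mpr (pow_le_one₀ ha0.le ha1.le)
      have hle : r m ≤ 2 * (a ^ m)⁻¹ := by
        simp only [hrdef]
        rcases max_cases 2 ((a ^ m)⁻¹) with ⟨h, _⟩ | ⟨h, _⟩ <;> rw [h] <;> nlinarith
      calc Real.log (r m) ≤ Real.log (2 * (a ^ m)⁻¹) :=
            Real.log_le_log (by linarith [hr2 m]) hle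
        _ = Real.log 2 + (m:ℝ) * b := by
            rw [Real.log_mul (by norm_num) (by positivity), Real.log_inv, Real.log_pow]
            simp only [hbdef]; ring
    have hsum : (∑' m, ℙ (s m)) = ∞ := by
      have hlower : ∀ m : ℕ, ENNReal.ofReal (Real.log 2 / (Real.log 2 + (m:ℝ)*b)) ≤ ℙ (s m) := by
        intro m
        rw [hs_prob m]
        apply ENNReal.ofReal_le_ofReal
        apply div_le_div_of_nonneg_left hlog2.le ?h1 (hlogr m)
        exact lt_of_lt_of_le hlog2 (Real.log_le_log (by norm_num) (hr2 m))
      refine top_unique (le_trans ?_ (ENNReal.tsum_le_tsum hlower))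
      rw [top_le_iff]
      set u : ℕ → ℝ := fun m => Real.log 2 / (Real.log 2 + (m:ℝ)*b) with hudef
      have hu_nonneg : ∀ m, 0 ≤ u m := by
        intro m
        have : 0 < Real.log 2 + (m:ℝ)*b := by positivity
        positivity
      have : (fun m => ENNReal.ofReal (u m)) = fun m => (((u m).toNNReal : ℝ≥0) : ℝ≥0∞) := rfl
      rw [this, ENNReal.tsum_coe_eq_top_iff_not_summable_coe]
      intro hsumm
      have hsummu : Summable u := by
        apply hsumm.congr
        intro m
        exact Real.coe_toNNReal _ (hu_nonneg m)
      -- compare with harmonic series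
      have hcomp : Summable (fun m : ℕ => Real.log 2 / (Real.log 2 + b) * (1 / ((m:ℝ)+1))) := by
        apply hsummu.of_nonneg_of_le
        · intro m; positivity
        · intro m
          simp only [hudef]
          rw [div_mul_div_comm, mul_one]
          apply div_le_div_of_nonneg_left hlog2.le (by positivity)
          have : ((m:ℝ)+1) * b ≥ (m:ℝ) * b := by nlinarith
          nlinarith [Nat.cast_nonneg (α := ℝ) m]
      have hharm : Summable (fun m : ℕ => 1 / ((m:ℝ)+1)) := by
        have hne : Real.log 2 / (Real.log 2 + b) ≠ 0 := by positivity
        have := hcomp.mul_left (Real.log 2 / (Real.log 2 + b))⁻¹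
        apply this.congr
        intro m
        field_simp
      exact (mt (summable_nat_add_iff (f := fun n : ℕ ↦ 1 / (n : ℝ)) 1).mp
        Real.not_summable_one_div_natCast) (by exact_mod_cast hharm)
    have hlimsup : ℙ (limsup s atTop) = 1 := measure_limsup_eq_one hs_meas hs_indep hsum
    have hfreq : ∀ᵐ ω ∂(ℙ : Measure Ω), ∃ᶠ m in atTop, ω ∈ s m := by
      have h1 : ∀ᵐ ω ∂(ℙ : Measure Ω), ω ∈ limsup s atTop := by
        refine (ae_iff_measure_eq (p := fun ω => ω ∈ limsup s atTop)
          (MeasurableSet.measurableSet_limsup hs_meas).nullMeasurableSet).mpr ?_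
        show ℙ (limsup s atTop) = ℙ Set.univ
        rw [hlimsup, measure_univ]
      filter_upwards [h1] with ω hω
      exact mem_limsup_iff_frequently_mem.mp hω
    have h2ae : ∀ᵐ ω ∂(ℙ : Measure Ω), ∀ m, 2 ≤ X m ω := by
      rw [ae_all_iff]
      intro m
      have hm : ℙ (X m ⁻¹' Set.Ici 2) = 1 := by
        rw [hP_Ici m 2 le_rfl, div_self hlog2.ne', ENNReal.ofReal_one]
      rw [ae_iff]
      have heq : {ω | ¬ 2 ≤ X m ω} = (X m ⁻¹' Set.Ici 2)ᶜ := by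
        ext ω; simp [Set.mem_Ici]
      rw [heq, prob_compl_eq_zero_iff ((hmeas m) measurableSet_Ici)]
      exact hm
    filter_upwards [hfreq, h2ae] with ω hfr h2
    set S : ℕ → ℝ := fun N => ∑ n ∈ Finset.range N, X (n + 1) ω * a ^ (n + 1) with hSdef
    have hterm : ∀ n : ℕ, 0 ≤ X (n+1) ω * a ^ (n+1) := by
      intro n
      have := h2 (n+1)
      positivity
    have hmono : Monotone S := by
      apply monotone_nat_of_le_succ
      intro N
      simp only [hSdef, Finset.sum_range_succ]
      linarith [hterm N]
    have hkey : ∀ K : ℕ, ∃ N, (K:ℝ) ≤ S N := by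
      intro K
      induction K with
      | zero => exact ⟨0, by simp [hSdef]⟩
      | succ K ih =>
        obtain ⟨N, hN⟩ := ih
        obtain ⟨m, hm, hmem⟩ := (frequently_atTop.mp hfr) (N+1)
        have hm1 : 1 ≤ m := le_trans (Nat.le_add_left 1 N) hm
        have hXm : 1 ≤ X m ω * a ^ m := by
          have h1 : (a ^ m)⁻¹ ≤ r m := le_max_right _ _
          have h2' : (a ^ m)⁻¹ ≤ X m ω := le_trans h1 hmem
          have h3 : (0:ℝ) < a ^ m := pow_pos ha0 m
          calc (1:ℝ) = (a^m)⁻¹ * a^m := by field_simp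
            _ ≤ X m ω * a ^ m := by nlinarith
        refine ⟨m, ?_⟩
        have hSm : S m = S (m-1) + X m ω * a ^ m := by
          have : m = (m-1) + 1 := (Nat.succ_pred_eq_of_pos hm1).symm
          rw [this]
          simp only [hSdef, Finset.sum_range_succ]
          rw [← this]
        have hmono' : S N ≤ S (m-1) := hmono (by omega)
        push_cast
        rw [hSm]
        linarith
    apply tendsto_atTop_atTop_of_monotone hmono
    intro C
    obtain ⟨K, hK⟩ := exists_nat_ge C
    obtain ⟨N, hN⟩ := hkey K
    exact ⟨N, le_trans hK hN⟩
end

section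
/- Let μ_0 be a probability measure on ℝ² and for t > 0 define the complex-valued function φ_t(ω, λ) = ∫∫ e^{iω(x+ut) + iλu} e^{-t ∫₀¹ |tωr + λ|^α dr} μ_0(dx, du), with α ∈ (0,2]. Then ∫∫_{ℝ²} |φ_t(ω,λ)| dλ dω ≤ (∫_ℝ (∫₀¹ |rt + s|^α dr)^{-2/α} ds)(∫_ℝ |w| e^{-t|w|^α} dw) < ∞ for every t > 0. -/
open MeasureTheory intervalIntegral Real Set ENNReal

lemma lint_scale {f : ℝ → ℝ≥0∞} (hf : Measurable f) {a : ℝ} (ha : a ≠ 0) :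
    ∫⁻ x, f x ∂volume = ENNReal.ofReal |a| * ∫⁻ x, f (a * x) ∂volume := by
  conv_lhs => rw [← Real.smul_map_volume_mul_left ha]
  rw [lintegral_smul_measure, lintegral_map hf (measurable_const_mul a), smul_eq_mul]

lemma lint_of_integrableOn {S : Set ℝ} {g : ℝ → ℝ} (hg : IntegrableOn g S)
    (h0 : ∀ x, 0 ≤ g x) : ∫⁻ x in S, ENNReal.ofReal (g x) < ⊤ := by
  have := hg.2
  rwa [hasFiniteIntegral_iff_ofReal (Filter.Eventually.of_forall h0)] at this

lemma even_tail_int {a : ℝ} (c : ℝ) (ha : 0 < a) :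
    IntegrableOn (fun x : ℝ => c * |x| ^ (-2:ℝ)) (Iio (-a) ∪ Ioi a) volume := by
  have h1 : IntegrableOn (fun x : ℝ => c * |x| ^ (-2:ℝ)) (Ioi a) volume := by
    refine integrableOn_congr_fun (fun x hx => ?_) measurableSet_Ioi |>.mpr
      ((integrableOn_Ioi_rpow_of_lt (show (-2:ℝ) < -1 by norm_num) ha).const_mul c)
    rw [abs_of_pos (ha.trans hx)]
  refine IntegrableOn.union ?_ h1
  have h_map_neg : (volume.restrict (Ioi a)).map Neg.neg = volume.restrict (Iio (-a)) := by
    conv => rhs; rw [← Measure.map_neg_eq_self (volume : Measure ℝ),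
      measurableEmbedding_neg.restrict_map]
    simp
  rw [IntegrableOn, ← h_map_neg, measurableEmbedding_neg.integrable_map_iff]
  simpa [Function.comp_def, IntegrableOn] using h1

lemma tail_finite {a c : ℝ} (hc : 0 ≤ c) (ha : 0 < a) :
    ∫⁻ x in {x : ℝ | a < |x|}, ENNReal.ofReal (c * |x| ^ (-2:ℝ)) ∂volume < ⊤ := by
  have hset : {x : ℝ | a < |x|} = Iio (-a) ∪ Ioi a := by
    ext x
    simp only [mem_setOf_eq, lt_abs, mem_union, mem_Iio, mem_Ioi]
    constructor
    · rintro (h | h)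
      · right; exact h
      · left; linarith
    · rintro (h | h)
      · right; linarith
      · left; exact h
  rw [hset]
  refine lint_of_integrableOn (even_tail_int c ha) fun x => by positivity


variable {α t : ℝ}

lemma Jcont (hα0 : 0 < α) (t : ℝ) :
    Continuous fun s : ℝ => ∫ r in (0:ℝ)..1, |r * t + s| ^ α := by
  apply intervalIntegral.continuous_parametric_intervalIntegral_of_continuous'
    (f := fun (s : ℝ) (r : ℝ) => |r * t + s| ^ α)
  apply Continuous.rpow_const
  · exact (continuous_snd.mul continuous_const |>.add continuous_fst).abs
  · exact fun _ => Or.inr hα0.le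

lemma Icont (hα0 : 0 < α) (t : ℝ) :
    Continuous fun p : ℝ × ℝ => ∫ r in (0:ℝ)..1, |t * p.1 * r + p.2| ^ α := by
  apply intervalIntegral.continuous_parametric_intervalIntegral_of_continuous'
    (f := fun (p : ℝ × ℝ) (r : ℝ) => |t * p.1 * r + p.2| ^ α)
  apply Continuous.rpow_const
  · exact ((continuous_const.mul (continuous_fst.comp continuous_fst)).mul continuous_snd
      |>.add (continuous_snd.comp continuous_fst)).abs
  · exact fun _ => Or.inr hα0.le

lemma Jintegrand_cont (hα0 : 0 < α) (t s : ℝ) :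
    Continuous fun r : ℝ => |r * t + s| ^ α :=
  ((continuous_id.mul continuous_const).add continuous_const).abs.rpow_const
    fun _ => Or.inr hα0.le

lemma Jpos (hα0 : 0 < α) (ht : 0 < t) (s : ℝ) :
    0 < ∫ r in (0:ℝ)..1, |r * t + s| ^ α := by
  rw [intervalIntegral.integral_pos_iff_support_of_nonneg_ae
    (Filter.Eventually.of_forall fun r => rpow_nonneg (abs_nonneg _) α)
    ((Jintegrand_cont hα0 t s).intervalIntegrable 0 1)]
  refine ⟨one_pos, ?_⟩
  have hsub : Ioc (0:ℝ) 1 \ {-s/t} ⊆ Function.support (fun r => |r * t + s| ^ α) ∩ Ioc 0 1 := by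
    rintro x ⟨hx, hx'⟩
    refine ⟨?_, hx⟩
    simp only [Function.mem_support]
    intro hzero
    rw [Real.rpow_eq_zero (abs_nonneg _) hα0.ne'] at hzero
    rw [abs_eq_zero] at hzero
    have h := hzero
    apply hx'
    simp only [mem_singleton_iff]
    field_simp
    linarith
  calc (0:ℝ≥0∞) < 1 := by norm_num
  _ = volume (Ioc (0:ℝ) 1 \ {-s/t}) := by
      rw [measure_diff_null (measure_singleton _)]; simp
  _ ≤ _ := measure_mono hsub

lemma Jlower (hα0 : 0 < α) (ht : 0 < t) {s : ℝ} (hs : 2*t ≤ |s|) :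
    (|s|/2) ^ α ≤ ∫ r in (0:ℝ)..1, |r * t + s| ^ α := by
  have h0 : ((|s|/2) ^ α : ℝ) = ∫ _r in (0:ℝ)..1, (|s|/2) ^ α := by simp
  rw [h0]
  apply intervalIntegral.integral_mono_on zero_le_one
    (intervalIntegrable_const) ((Jintegrand_cont hα0 t s).intervalIntegrable 0 1)
  intro r hr
  apply Real.rpow_le_rpow (by positivity) ?_ hα0.le
  have h1 : |r * t| ≤ t := by
    rw [abs_mul, abs_of_pos ht, abs_of_nonneg hr.1]
    nlinarith [hr.2]
  have h2 : |s| ≤ |r * t + s| + |r * t| := by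
    calc |s| = |r * t + s + -(r*t)| := by ring_nf
    _ ≤ |r * t + s| + |-(r*t)| := abs_add_le _ _
    _ = _ := by rw [abs_neg]
  linarith


lemma phi_bound (μ₀ : Measure (ℝ × ℝ)) [IsProbabilityMeasure μ₀] (c : ℝ)
    (g : ℝ × ℝ → ℝ) :
    ‖∫ p : ℝ × ℝ, Complex.exp (Complex.I * ((g p : ℝ) : ℂ))
      * Complex.exp (-((c : ℝ) : ℂ)) ∂μ₀‖ ≤ Real.exp (-c) := by
  calc ‖∫ p : ℝ × ℝ, Complex.exp (Complex.I * ((g p : ℝ) : ℂ))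
      * Complex.exp (-((c : ℝ) : ℂ)) ∂μ₀‖
      ≤ Real.exp (-c) * (μ₀ Set.univ).toReal := by
        apply MeasureTheory.norm_integral_le_of_norm_le_const
        apply Filter.Eventually.of_forall
        intro p
        rw [norm_mul]
        simp [Complex.norm_exp]
  _ = Real.exp (-c) := by simp


lemma exp_tail_bound {α t : ℝ} (hα0 : 0 < α) (ht : 0 < t) :
    ∃ C : ℝ, 0 ≤ C ∧ ∀ x : ℝ, 1 < |x| →
      |x| * Real.exp (-t * |x| ^ α) ≤ C * |x| ^ (-2:ℝ) := by
  set n : ℕ := ⌈3/α⌉₊ with hn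
  have hn3 : 3 ≤ α * n := by
    have := Nat.le_ceil (3/α)
    rw [← hn] at this
    calc (3:ℝ) = α * (3/α) := by field_simp
    _ ≤ α * n := by apply mul_le_mul_of_nonneg_left this hα0.le
  refine ⟨(Nat.factorial n : ℝ) / t ^ n, by positivity, fun x hx => ?_⟩
  have hx0 : (0:ℝ) < |x| := lt_trans one_pos hx
  have hy : 0 < t * |x| ^ α := by positivity
  have hexp : Real.exp (-(t * |x| ^ α)) ≤ (Nat.factorial n : ℝ) / (t * |x| ^ α) ^ n := by
    rw [Real.exp_neg]
    calc (Real.exp (t * |x| ^ α))⁻¹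
        ≤ ((t * |x| ^ α) ^ n / (Nat.factorial n : ℝ))⁻¹ :=
          inv_anti₀ (by positivity) (Real.pow_div_factorial_le_exp _ hy.le n)
    _ = (Nat.factorial n : ℝ) / (t * |x| ^ α) ^ n := by rw [inv_div]
  have key : |x| * Real.exp (-t * |x| ^ α) ≤ ((Nat.factorial n : ℝ) / t ^ n) * |x| ^ (1 - α * n) := by
    rw [neg_mul]
    calc |x| * Real.exp (-(t * |x| ^ α)) ≤ |x| * ((Nat.factorial n : ℝ) / (t * |x| ^ α) ^ n) :=
          mul_le_mul_of_nonneg_left hexp hx0.le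
    _ = ((Nat.factorial n : ℝ) / t ^ n) * |x| ^ (1 - α * n) := by
        rw [mul_pow, ← Real.rpow_natCast (|x| ^ α) n, ← Real.rpow_mul (abs_nonneg x)]
        rw [Real.rpow_sub hx0, Real.rpow_one]
        field_simp
  refine key.trans ?_
  apply mul_le_mul_of_nonneg_left ?_ (by positivity)
  exact Real.rpow_le_rpow_of_exponent_le hx.le (by linarith)

lemma W_finite {α t : ℝ} (hα0 : 0 < α) (ht : 0 < t) :
    ∫⁻ w : ℝ, ENNReal.ofReal (|w| * Real.exp (-t * |w| ^ α)) ∂volume < ⊤ := by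
  obtain ⟨C, hC, hCb⟩ := exp_tail_bound hα0 ht
  have hmeas : MeasurableSet {x : ℝ | 1 < |x|} :=
    measurableSet_lt measurable_const measurable_abs
  rw [← lintegral_add_compl _ hmeas]
  apply ENNReal.add_lt_top.mpr
  constructor
  · calc ∫⁻ x in {x : ℝ | 1 < |x|}, ENNReal.ofReal (|x| * Real.exp (-t * |x| ^ α)) ∂volume
        ≤ ∫⁻ x in {x : ℝ | 1 < |x|}, ENNReal.ofReal (C * |x| ^ (-2:ℝ)) ∂volume := by
          apply setLIntegral_mono (by fun_prop) fun x hx => ENNReal.ofReal_le_ofReal (hCb x hx)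
    _ < ⊤ := tail_finite hC one_pos
  · calc ∫⁻ x in {x : ℝ | 1 < |x|}ᶜ, ENNReal.ofReal (|x| * Real.exp (-t * |x| ^ α)) ∂volume
        ≤ ∫⁻ _x in {x : ℝ | 1 < |x|}ᶜ, 1 ∂volume := by
          apply setLIntegral_mono measurable_const
          intro x hx
          simp only [mem_compl_iff, mem_setOf_eq, not_lt] at hx
          rw [show (1:ℝ≥0∞) = ENNReal.ofReal 1 by simp]
          apply ENNReal.ofReal_le_ofReal
          calc |x| * Real.exp (-t * |x| ^ α) ≤ 1 * 1 := by
                apply mul_le_mul hx ?_ (Real.exp_nonneg _) one_pos.le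
                rw [Real.exp_le_one_iff]
                have : (0:ℝ) ≤ t * |x| ^ α := by positivity
                linarith
          _ = 1 := by norm_num
    _ = volume {x : ℝ | 1 < |x|}ᶜ := by simp
    _ ≤ volume (Icc (-1:ℝ) 1) := by
          apply measure_mono
          intro x hx
          simp only [mem_compl_iff, mem_setOf_eq, not_lt] at hx
          rw [abs_le] at hx
          exact hx
    _ < ⊤ := by rw [Real.volume_Icc]; norm_num

lemma S_finite {α t : ℝ} (hα0 : 0 < α) (hα2 : α ≤ 2) (ht : 0 < t) :
    ∫⁻ s : ℝ, ENNReal.ofReal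
        ((∫ r in (0:ℝ)..1, |r * t + s| ^ α) ^ (-(2 / α))) ∂volume < ⊤ := by
  set J : ℝ → ℝ := fun s => ∫ r in (0:ℝ)..1, |r * t + s| ^ α with hJ
  have hJc : Continuous J := Jcont hα0 t
  have hJp : ∀ s, 0 < J s := Jpos hα0 ht
  have hmeas : MeasurableSet {s : ℝ | 2*t < |s|} :=
    measurableSet_lt measurable_const measurable_abs
  rw [← lintegral_add_compl _ hmeas]
  apply ENNReal.add_lt_top.mpr
  constructor
  · -- tail part
    calc ∫⁻ s in {s : ℝ | 2*t < |s|}, ENNReal.ofReal (J s ^ (-(2/α))) ∂volume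
        ≤ ∫⁻ s in {s : ℝ | 2*t < |s|}, ENNReal.ofReal (4 * |s| ^ (-2:ℝ)) ∂volume := by
          apply setLIntegral_mono (by fun_prop)
          intro s hs
          simp only [mem_setOf_eq] at hs
          apply ENNReal.ofReal_le_ofReal
          have habs : (0:ℝ) < |s| := lt_trans (by positivity) hs
          have h1 : J s ^ (-(2/α)) ≤ ((|s|/2) ^ α) ^ (-(2/α)) :=
            Real.rpow_le_rpow_of_nonpos (Real.rpow_pos_of_pos (by positivity) α)
              (Jlower hα0 ht hs.le) (neg_nonpos.mpr (by positivity))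
          refine h1.trans_eq ?_
          rw [← Real.rpow_mul (by positivity),
            show α * (-(2/α)) = -2 by field_simp,
            Real.div_rpow (abs_nonneg s) (by norm_num : (0:ℝ) ≤ 2)]
          have h2 : (2:ℝ) ^ (-2:ℝ) = 1/4 := by
            rw [show (-2:ℝ) = ((-2:ℤ):ℝ) by norm_num, Real.rpow_intCast]
            norm_num
          rw [h2]
          ring
    _ < ⊤ := tail_finite (by norm_num) (by linarith)
  · -- compact part
    obtain ⟨s₀, hs₀mem, hs₀⟩ :=
      (isCompact_Icc (a := -(2*t)) (b := 2*t)).exists_isMinOn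
        (nonempty_Icc.mpr (by linarith)) hJc.continuousOn
    calc ∫⁻ s in {s : ℝ | 2*t < |s|}ᶜ, ENNReal.ofReal (J s ^ (-(2/α))) ∂volume
        ≤ ∫⁻ _s in {s : ℝ | 2*t < |s|}ᶜ, ENNReal.ofReal (J s₀ ^ (-(2/α))) ∂volume := by
          apply setLIntegral_mono measurable_const
          intro s hs
          simp only [mem_compl_iff, mem_setOf_eq, not_lt] at hs
          apply ENNReal.ofReal_le_ofReal
          apply Real.rpow_le_rpow_of_nonpos (hJp s₀) ?_ (neg_nonpos.mpr (by positivity))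
          apply hs₀
          rw [mem_Icc]
          rw [abs_le] at hs
          exact hs
    _ = ENNReal.ofReal (J s₀ ^ (-(2/α))) * volume {s : ℝ | 2*t < |s|}ᶜ :=
          setLIntegral_const _ _
    _ ≤ ENNReal.ofReal (J s₀ ^ (-(2/α))) * volume (Icc (-(2*t)) (2*t)) := by
          apply mul_le_mul_right
          apply measure_mono
          intro s hs
          simp only [mem_compl_iff, mem_setOf_eq, not_lt] at hs
          rw [abs_le] at hs
          exact hs
    _ < ⊤ := by
          apply ENNReal.mul_lt_top ENNReal.ofReal_lt_top
          rw [Real.volume_Icc]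
          exact ENNReal.ofReal_lt_top

theorem stmt_18
    (μ₀ : Measure (ℝ × ℝ)) [IsProbabilityMeasure μ₀]
    (α : ℝ) (hα0 : 0 < α) (hα2 : α ≤ 2)
    (t : ℝ) (ht : 0 < t)
    (φ : ℝ → ℝ → ℂ)
    (hφ : ∀ ω l : ℝ, φ ω l =
        ∫ p : ℝ × ℝ, Complex.exp (Complex.I * ((ω * (p.1 + p.2 * t) + l * p.2 : ℝ) : ℂ))
          * Complex.exp (-((t * ∫ r in (0:ℝ)..1, |t * ω * r + l| ^ α : ℝ) : ℂ)) ∂μ₀) :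
    (∫⁻ ω : ℝ, ∫⁻ l : ℝ, ‖φ ω l‖₊ ∂volume ∂volume
        ≤ (∫⁻ s : ℝ, ENNReal.ofReal
              ((∫ r in (0:ℝ)..1, |r * t + s| ^ α) ^ (-(2 / α))) ∂volume)
          * (∫⁻ w : ℝ, ENNReal.ofReal (|w| * Real.exp (-t * |w| ^ α)) ∂volume))
    ∧ (∫⁻ s : ℝ, ENNReal.ofReal
          ((∫ r in (0:ℝ)..1, |r * t + s| ^ α) ^ (-(2 / α))) ∂volume)
        * (∫⁻ w : ℝ, ENNReal.ofReal (|w| * Real.exp (-t * |w| ^ α)) ∂volume) < ⊤ := by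
  have hJc : Continuous fun s : ℝ => ∫ r in (0:ℝ)..1, |r * t + s| ^ α := Jcont hα0 t
  have hIc : Continuous fun p : ℝ × ℝ => ∫ r in (0:ℝ)..1, |t * p.1 * r + p.2| ^ α :=
    Icont hα0 t
  have hJp : ∀ s, 0 < ∫ r in (0:ℝ)..1, |r * t + s| ^ α := Jpos hα0 ht
  set J : ℝ → ℝ := fun s => ∫ r in (0:ℝ)..1, |r * t + s| ^ α with hJdef
  set W : ℝ≥0∞ := ∫⁻ w : ℝ, ENNReal.ofReal (|w| * Real.exp (-t * |w| ^ α)) ∂volume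
    with hWdef
  refine ⟨?_, ENNReal.mul_lt_top (S_finite hα0 hα2 ht) (W_finite hα0 ht)⟩
  -- pointwise bound on φ
  have hpt : ∀ ω l : ℝ, (‖φ ω l‖₊ : ℝ≥0∞)
      ≤ ENNReal.ofReal (Real.exp (-(t * ∫ r in (0:ℝ)..1, |t * ω * r + l| ^ α))) := by
    intro ω l
    rw [← ENNReal.ofReal_coe_nnreal, coe_nnnorm]
    apply ENNReal.ofReal_le_ofReal
    rw [hφ]
    exact phi_bound μ₀ (t * ∫ r in (0:ℝ)..1, |t * ω * r + l| ^ α)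
      (fun p => ω * (p.1 + p.2 * t) + l * p.2)
  calc ∫⁻ ω : ℝ, ∫⁻ l : ℝ, ‖φ ω l‖₊ ∂volume ∂volume
      ≤ ∫⁻ ω : ℝ, ∫⁻ l : ℝ, ENNReal.ofReal
          (Real.exp (-(t * ∫ r in (0:ℝ)..1, |t * ω * r + l| ^ α))) ∂volume ∂volume :=
        lintegral_mono fun ω => lintegral_mono fun l => hpt ω l
  _ = ∫⁻ ω : ℝ, ∫⁻ s : ℝ, ENNReal.ofReal
        (|ω| * Real.exp (-(t * (|ω| ^ α * J s)))) ∂volume ∂volume := by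
      apply lintegral_congr_ae
      have hae : ∀ᵐ ω : ℝ, ω ≠ 0 := by
        rw [ae_iff]
        have : {a : ℝ | ¬ a ≠ 0} = {(0:ℝ)} := by ext x; simp
        rw [this]
        exact measure_singleton 0
      filter_upwards [hae] with ω hω
      have hmeas : Measurable fun l : ℝ => ENNReal.ofReal
          (Real.exp (-(t * ∫ r in (0:ℝ)..1, |t * ω * r + l| ^ α))) := by
        apply (ENNReal.continuous_ofReal.comp (Real.continuous_exp.comp ?_)).measurable
        exact ((continuous_const.mul (hIc.comp (continuous_const.prodMk
          continuous_id))).neg)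
      rw [lint_scale hmeas hω]
      have hscale : ∀ s : ℝ, (∫ r in (0:ℝ)..1, |t * ω * r + ω * s| ^ α)
          = |ω| ^ α * J s := by
        intro s
        rw [hJdef]
        rw [show |ω| ^ α * (∫ r in (0:ℝ)..1, |r * t + s| ^ α)
          = ∫ r in (0:ℝ)..1, |ω| ^ α * |r * t + s| ^ α from
            (intervalIntegral.integral_const_mul _ _).symm]
        apply intervalIntegral.integral_congr
        intro r _
        show |t * ω * r + ω * s| ^ α = |ω| ^ α * |r * t + s| ^ α
        rw [show t * ω * r + ω * s = ω * (r * t + s) by ring, abs_mul,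
          Real.mul_rpow (abs_nonneg _) (abs_nonneg _)]
      rw [← lintegral_const_mul' _ _ ENNReal.ofReal_ne_top]
      apply lintegral_congr
      intro s
      rw [hscale s, ← ENNReal.ofReal_mul (abs_nonneg ω)]
  _ = ∫⁻ s : ℝ, ∫⁻ ω : ℝ, ENNReal.ofReal
        (|ω| * Real.exp (-(t * (|ω| ^ α * J s)))) ∂volume ∂volume := by
      apply lintegral_lintegral_swap
      apply Continuous.aemeasurable
      apply ENNReal.continuous_ofReal.comp
      apply Continuous.mul (continuous_fst.abs)
      apply Real.continuous_exp.comp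
      apply Continuous.neg
      apply continuous_const.mul
      exact ((continuous_fst.abs.rpow_const fun _ => Or.inr hα0.le).mul
        (hJc.comp continuous_snd))
  _ = ∫⁻ s : ℝ, ENNReal.ofReal (J s ^ (-(2/α))) * W ∂volume := by
      apply lintegral_congr
      intro s
      set c : ℝ := (J s) ^ (-(1/α)) with hcdef
      have hc : 0 < c := Real.rpow_pos_of_pos (hJp s) _
      have hcα : c ^ α = (J s)⁻¹ := by
        rw [hcdef, ← Real.rpow_mul (hJp s).le,
          show -(1/α) * α = -1 by field_simp, Real.rpow_neg_one]
      have hmeas2 : Measurable fun ω : ℝ => ENNReal.ofReal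
          (|ω| * Real.exp (-(t * (|ω| ^ α * J s)))) := by
        apply (ENNReal.continuous_ofReal.comp ?_).measurable
        exact (continuous_abs.mul (Real.continuous_exp.comp
          ((continuous_const.mul ((continuous_abs.rpow_const fun _ => Or.inr hα0.le).mul
            continuous_const)).neg)))
      rw [lint_scale hmeas2 hc.ne']
      have hptw : ∀ w : ℝ, |c * w| * Real.exp (-(t * (|c * w| ^ α * J s)))
          = c * (|w| * Real.exp (-t * |w| ^ α)) := by
        intro w
        rw [abs_mul, abs_of_pos hc, Real.mul_rpow hc.le (abs_nonneg w), hcα,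
          show (J s)⁻¹ * |w| ^ α * J s = |w| ^ α * ((J s)⁻¹ * J s) by ring,
          inv_mul_cancel₀ (hJp s).ne', mul_one, neg_mul]
        ring
      have : (∫⁻ w : ℝ, ENNReal.ofReal
          (|c * w| * Real.exp (-(t * (|c * w| ^ α * J s)))) ∂volume)
          = ENNReal.ofReal c * W := by
        rw [hWdef, ← lintegral_const_mul' _ _ ENNReal.ofReal_ne_top]
        apply lintegral_congr
        intro w
        rw [hptw w, ENNReal.ofReal_mul hc.le]
      rw [this, abs_of_pos hc, ← mul_assoc, ← ENNReal.ofReal_mul hc.le]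
      congr 2
      rw [hcdef, ← Real.rpow_add (hJp s), show -(1/α) + -(1/α) = -(2/α) by ring]
  _ = (∫⁻ s : ℝ, ENNReal.ofReal (J s ^ (-(2/α))) ∂volume) * W := by
      apply lintegral_mul_const
      apply (ENNReal.continuous_ofReal.comp ?_).measurable
      exact hJc.rpow_const fun s => Or.inl (hJp s).ne'
end
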